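/- arXiv:1901.00164 — 3 statements merged into one kernel-verified Lean document; each statement's English description precedes it below -/
import Mathlib

section
/- Let G be a directed graph with V(G) = V(G_1) ∪ V(G_2) ∪ V(G_3) (disjoint), such that there are no edges (in either direction) between V(G_1) and V(G_3), where G_1, G_2, G_3 are the induced subgraphs on these vertex sets. Then minrank_q(G_1) + minrank_q(G_3) ≤ minrank_q(G) ≤ minrank_q(G_1) + minrank_q(G_2) + minrank_q(G_3). -/
/-- A matrix `A` fits a directed graph with edge relation `E` if it has 1's on the
diagonal and 0's at off-diagonal non-edges. -/
def Fits {V : Type*} {F : Type*} [Field F] (E : V → V → Prop)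
    (A : Matrix V V F) : Prop :=
  (∀ v, A v v = 1) ∧ ∀ u v, u ≠ v → ¬ E u v → A u v = 0

/-- The minrank over `F` of the directed graph with edge relation `E`. -/
noncomputable def minrank (F : Type*) [Field F] {V : Type*} [Fintype V]
    (E : V → V → Prop) : ℕ :=
  sInf {r | ∃ A : Matrix V V F, Fits E A ∧ A.rank = r}

open Matrix

section BlockRank

variable {F : Type*} [Field F]

lemma myRange_prodMap {R M₁ M₂ M₃ M₄ : Type*} [Ring R]
    [AddCommGroup M₁] [AddCommGroup M₂] [AddCommGroup M₃] [AddCommGroup M₄]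
    [Module R M₁] [Module R M₂] [Module R M₃] [Module R M₄]
    (f : M₁ →ₗ[R] M₂) (g : M₃ →ₗ[R] M₄) :
    LinearMap.range (f.prodMap g) = (LinearMap.range f).prod (LinearMap.range g) := by
  ext ⟨x, y⟩
  constructor
  · rintro ⟨⟨a, b⟩, h⟩
    simp only [LinearMap.prodMap_apply, Prod.mk.injEq] at h
    exact ⟨⟨a, h.1⟩, ⟨b, h.2⟩⟩
  · rintro ⟨⟨a, ha⟩, ⟨b, hb⟩⟩
    exact ⟨(a, b), by simp [ha, hb]⟩

/-- A submodule product is equivalent to the product of the submodules. -/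
def mySubmoduleProdEquiv {R M N : Type*} [Ring R] [AddCommGroup M] [AddCommGroup N]
    [Module R M] [Module R N] (p : Submodule R M) (q : Submodule R N) :
    (p.prod q) ≃ₗ[R] p × q where
  toFun x := (⟨x.1.1, x.2.1⟩, ⟨x.1.2, x.2.2⟩)
  invFun y := ⟨(y.1.1, y.2.1), ⟨y.1.2, y.2.2⟩⟩
  map_add' _ _ := rfl
  map_smul' _ _ := rfl
  left_inv _ := rfl
  right_inv _ := rfl

lemma myFinrank_prod {M N : Type*} [AddCommGroup M] [AddCommGroup N]
    [Module F M] [Module F N] (p : Submodule F M) (q : Submodule F N)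
    [Module.Finite F p] [Module.Finite F q] :
    Module.finrank F (p.prod q) = Module.finrank F p + Module.finrank F q := by
  rw [LinearEquiv.finrank_eq (mySubmoduleProdEquiv p q), Module.finrank_prod]

lemma myRank_fromBlocks {m n : Type*} [Fintype m] [Fintype n]
    (B : Matrix m m F) (D : Matrix n n F) :
    (Matrix.fromBlocks B 0 0 D).rank = B.rank + D.rank := by
  classical
  set e := LinearEquiv.sumArrowLequivProdArrow m n F F with he
  have key : (Matrix.fromBlocks B 0 0 D).mulVecLin =
      e.symm.toLinearMap.comp ((B.mulVecLin.prodMap D.mulVecLin).comp e.toLinearMap) := by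
    apply LinearMap.ext; intro x; funext i
    cases i <;>
      simp [he, Matrix.mulVecLin_apply, Matrix.fromBlocks_mulVec,
        LinearEquiv.sumArrowLequivProdArrow, Equiv.sumArrowEquivProdArrow]
  rw [Matrix.rank, Matrix.rank, Matrix.rank, key, LinearMap.range_comp, LinearMap.range_comp,
    LinearEquiv.range, Submodule.map_top, LinearEquiv.finrank_map_eq, myRange_prodMap,
    myFinrank_prod]

lemma myRank_add_le {m n : Type*} [Fintype m] [Fintype n] (A B : Matrix m n F) :
    (A + B).rank ≤ A.rank + B.rank := by
  rw [Matrix.rank, Matrix.rank, Matrix.rank, Matrix.mulVecLin_add]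
  have hle : LinearMap.range (A.mulVecLin + B.mulVecLin) ≤
      LinearMap.range A.mulVecLin ⊔ LinearMap.range B.mulVecLin := by
    rintro x ⟨y, rfl⟩
    exact Submodule.mem_sup.mpr ⟨A.mulVecLin y, ⟨y, rfl⟩, B.mulVecLin y, ⟨y, rfl⟩, rfl⟩
  exact (Submodule.finrank_mono hle).trans
    (Submodule.finrank_add_le_finrank_add_finrank _ _)

end BlockRank

section Sel
variable {F : Type*} [Field F] {V : Type*} [Fintype V] [DecidableEq V]

/-- Row-selection matrix for `f : I → V`. -/
def rsel (F : Type*) [Field F] {V : Type*} [DecidableEq V] {I : Type*} (f : I → V) :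
    Matrix I V F := Matrix.of fun i v => if v = f i then 1 else 0

/-- Column-selection matrix. -/
def csel (F : Type*) [Field F] {V : Type*} [DecidableEq V] {I : Type*} (f : I → V) :
    Matrix V I F := Matrix.of fun v i => if v = f i then 1 else 0

lemma rsel_mul {I J : Type*} [Fintype I] (f : I → V) (A : Matrix V J F) :
    (rsel F f) * A = A.submatrix f id := by
  ext i v
  simp [rsel, Matrix.mul_apply, ite_mul, one_mul, zero_mul, Finset.sum_ite_eq']

lemma mul_csel {I J : Type*} [Fintype J] (g : J → V) (A : Matrix I V F) :
    A * (csel F g) = A.submatrix id g := by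
  ext i j
  simp [csel, Matrix.mul_apply, mul_ite, mul_one, mul_zero, Finset.sum_ite_eq']

lemma rank_submatrix_le' {I J : Type*} [Fintype I] [Fintype J] (f : I → V) (g : J → V)
    (A : Matrix V V F) : (A.submatrix f g).rank ≤ A.rank := by
  have h : A.submatrix f g = (rsel F f) * A * (csel F g) := by
    rw [Matrix.mul_assoc, mul_csel, rsel_mul, Matrix.submatrix_submatrix]
    rfl
  rw [h]
  exact (Matrix.rank_mul_le_left _ _).trans (Matrix.rank_mul_le_right _ _)

variable {S : Set V} [DecidablePred (· ∈ S)]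

/-- Pad a matrix indexed by a subtype by zeros. -/
def pad (B : Matrix S S F) : Matrix V V F :=
  csel F (Subtype.val : S → V) * B * rsel F (Subtype.val : S → V)

lemma csel_mul_apply (B : Matrix S S F) {u : V} (hu : u ∈ S) (t : S) :
    (csel F (Subtype.val : S → V) * B) u t = B ⟨u, hu⟩ t := by
  rw [Matrix.mul_apply, Fintype.sum_eq_single (⟨u, hu⟩ : S)]
  · simp [csel]
  · intro s hs
    simp only [csel, Matrix.of_apply, ite_mul, one_mul, zero_mul, ite_eq_right_iff]
    intro h
    exact absurd (Subtype.ext h.symm) hs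
lemma csel_mul_apply_zero (B : Matrix S S F) {u : V} (hu : u ∉ S) (t : S) :
    (csel F (Subtype.val : S → V) * B) u t = 0 := by
  rw [Matrix.mul_apply]
  refine Finset.sum_eq_zero fun s _ => ?_
  simp only [csel, Matrix.of_apply, ite_mul, one_mul, zero_mul, ite_eq_right_iff]
  intro h
  exact absurd (h ▸ s.2) hu

lemma mul_rsel_apply {I : Type*} (C : Matrix I S F) (i : I) {v : V} (hv : v ∈ S) :
    (C * rsel F (Subtype.val : S → V)) i v = C i ⟨v, hv⟩ := by
  rw [Matrix.mul_apply, Fintype.sum_eq_single (⟨v, hv⟩ : S)]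
  · simp [rsel]
  · intro s hs
    simp only [rsel, Matrix.of_apply, mul_ite, mul_one, mul_zero, ite_eq_right_iff]
    intro h
    exact absurd (Subtype.ext h.symm) hs

lemma mul_rsel_apply_zero {I : Type*} (C : Matrix I S F) (i : I) {v : V} (hv : v ∉ S) :
    (C * rsel F (Subtype.val : S → V)) i v = 0 := by
  rw [Matrix.mul_apply]
  refine Finset.sum_eq_zero fun s _ => ?_
  simp only [rsel, Matrix.of_apply, mul_ite, mul_one, mul_zero, ite_eq_right_iff]
  intro h
  exact absurd (h ▸ s.2) hv

lemma pad_apply_mem (B : Matrix S S F) {u v : V} (hu : u ∈ S) (hv : v ∈ S) :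
    pad B u v = B ⟨u, hu⟩ ⟨v, hv⟩ := by
  rw [pad, mul_rsel_apply _ _ hv, csel_mul_apply _ hu]

lemma pad_apply_left (B : Matrix S S F) {u : V} (v : V) (hu : u ∉ S) :
    pad B u v = 0 := by
  by_cases hv : v ∈ S
  · rw [pad, mul_rsel_apply _ _ hv, csel_mul_apply_zero _ hu]
  · rw [pad, mul_rsel_apply_zero _ _ hv]

lemma pad_apply_right (B : Matrix S S F) (u : V) {v : V} (hv : v ∉ S) :
    pad B u v = 0 := by
  rw [pad, mul_rsel_apply_zero _ _ hv]

lemma pad_rank_le (B : Matrix S S F) : (pad B).rank ≤ B.rank :=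
  (Matrix.rank_mul_le_left _ _).trans (Matrix.rank_mul_le_right _ _)

end Sel

section MinrankBasic

variable {F : Type*} [Field F] {W : Type*} [Fintype W]

lemma fits_one [DecidableEq W] (E : W → W → Prop) : Fits E (1 : Matrix W W F) :=
  ⟨fun v => Matrix.one_apply_eq v, fun _ _ huv _ => Matrix.one_apply_ne huv⟩

lemma exists_fits_rank_eq_minrank (E : W → W → Prop) :
    ∃ A : Matrix W W F, Fits E A ∧ A.rank = minrank F E := by
  classical
  exact Nat.sInf_mem (⟨_, (1 : Matrix W W F), fits_one E, rfl⟩ :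
    {r | ∃ A : Matrix W W F, Fits E A ∧ A.rank = r}.Nonempty)

lemma minrank_le_of_fits (E : W → W → Prop) {A : Matrix W W F} (hA : Fits E A) :
    minrank F E ≤ A.rank :=
  Nat.sInf_le ⟨A, hA, rfl⟩

end MinrankBasic

theorem minrank_three_part_bounds {V : Type*} [Fintype V] {F : Type*} [Field F]
    (E : V → V → Prop) (S₁ S₂ S₃ : Set V)
    [DecidablePred (· ∈ S₁)] [DecidablePred (· ∈ S₂)] [DecidablePred (· ∈ S₃)]
    (h12 : Disjoint S₁ S₂) (h13d : Disjoint S₁ S₃) (h23 : Disjoint S₂ S₃)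
    (hcover : S₁ ∪ S₂ ∪ S₃ = Set.univ)
    (h13 : ∀ u ∈ S₁, ∀ v ∈ S₃, ¬ E u v ∧ ¬ E v u) :
    minrank F (fun u v : S₁ => E u.1 v.1) + minrank F (fun u v : S₃ => E u.1 v.1)
        ≤ minrank F E ∧
    minrank F E ≤ minrank F (fun u v : S₁ => E u.1 v.1)
        + minrank F (fun u v : S₂ => E u.1 v.1)
        + minrank F (fun u v : S₃ => E u.1 v.1) := by
  classical
  obtain ⟨A, hA, hAr⟩ := exists_fits_rank_eq_minrank (F := F) E
  obtain ⟨A₁, hA₁, hA₁r⟩ :=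
    exists_fits_rank_eq_minrank (F := F) (fun u v : S₁ => E u.1 v.1)
  obtain ⟨A₂, hA₂, hA₂r⟩ :=
    exists_fits_rank_eq_minrank (F := F) (fun u v : S₂ => E u.1 v.1)
  obtain ⟨A₃, hA₃, hA₃r⟩ :=
    exists_fits_rank_eq_minrank (F := F) (fun u v : S₃ => E u.1 v.1)
  constructor
  · -- lower bound
    set B₁ : Matrix S₁ S₁ F := A.submatrix Subtype.val Subtype.val with hB₁def
    set B₃ : Matrix S₃ S₃ F := A.submatrix Subtype.val Subtype.val with hB₃def
    have hB₁ : Fits (fun u v : S₁ => E u.1 v.1) B₁ :=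
      ⟨fun v => hA.1 v.1,
       fun u v huv hE => hA.2 u.1 v.1 (fun h => huv (Subtype.ext h)) hE⟩
    have hB₃ : Fits (fun u v : S₃ => E u.1 v.1) B₃ :=
      ⟨fun v => hA.1 v.1,
       fun u v huv hE => hA.2 u.1 v.1 (fun h => huv (Subtype.ext h)) hE⟩
    have hsub : A.submatrix (Sum.elim (Subtype.val : S₁ → V) (Subtype.val : S₃ → V))
        (Sum.elim Subtype.val Subtype.val) = Matrix.fromBlocks B₁ 0 0 B₃ := by
      ext i j
      cases i with
      | inl u =>
        cases j with
        | inl v => simp [Matrix.fromBlocks, B₁]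
        | inr v =>
          have hne : u.1 ≠ v.1 := fun h => Set.disjoint_left.mp h13d u.2 (h ▸ v.2)
          simp only [Matrix.submatrix_apply, Sum.elim_inl, Sum.elim_inr,
            Matrix.fromBlocks_apply₁₂, Matrix.zero_apply]
          exact hA.2 u.1 v.1 hne (h13 u.1 u.2 v.1 v.2).1
      | inr u =>
        cases j with
        | inl v =>
          have hne : u.1 ≠ v.1 := fun h => Set.disjoint_left.mp h13d v.2 (h ▸ u.2)
          simp only [Matrix.submatrix_apply, Sum.elim_inl, Sum.elim_inr,
            Matrix.fromBlocks_apply₂₁, Matrix.zero_apply]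
          exact hA.2 u.1 v.1 hne (h13 v.1 v.2 u.1 u.2).2
        | inr v => simp [Matrix.fromBlocks, B₃]
    calc minrank F (fun u v : S₁ => E u.1 v.1) + minrank F (fun u v : S₃ => E u.1 v.1)
        ≤ B₁.rank + B₃.rank :=
          add_le_add (minrank_le_of_fits _ hB₁) (minrank_le_of_fits _ hB₃)
      _ = (Matrix.fromBlocks B₁ 0 0 B₃).rank := (myRank_fromBlocks B₁ B₃).symm
      _ = (A.submatrix (Sum.elim (Subtype.val : S₁ → V) (Subtype.val : S₃ → V))
            (Sum.elim Subtype.val Subtype.val)).rank := by rw [hsub]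
      _ ≤ A.rank := rank_submatrix_le' _ _ _
      _ = minrank F E := hAr
  · -- upper bound
    set B : Matrix V V F := pad A₁ + pad A₂ + pad A₃ with hBdef
    have hmem : ∀ v : V, v ∈ S₁ ∨ v ∈ S₂ ∨ v ∈ S₃ := fun v => by
      have h := Set.eq_univ_iff_forall.mp hcover v
      simpa [Set.mem_union, or_assoc] using h
    have hfits : Fits E B := by
      constructor
      · intro v
        simp only [hBdef, Matrix.add_apply]
        rcases hmem v with hv | hv | hv
        · have h2 : v ∉ S₂ := fun h => Set.disjoint_left.mp h12 hv h
          have h3 : v ∉ S₃ := fun h => Set.disjoint_left.mp h13d hv h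
          rw [pad_apply_mem A₁ hv hv, pad_apply_left A₂ _ h2, pad_apply_left A₃ _ h3, hA₁.1]
          ring
        · have h1 : v ∉ S₁ := fun h => Set.disjoint_left.mp h12 h hv
          have h3 : v ∉ S₃ := fun h => Set.disjoint_left.mp h23 hv h
          rw [pad_apply_mem A₂ hv hv, pad_apply_left A₁ _ h1, pad_apply_left A₃ _ h3, hA₂.1]
          ring
        · have h1 : v ∉ S₁ := fun h => Set.disjoint_left.mp h13d h hv
          have h2 : v ∉ S₂ := fun h => Set.disjoint_left.mp h23 h hv
          rw [pad_apply_mem A₃ hv hv, pad_apply_left A₁ _ h1, pad_apply_left A₂ _ h2, hA₃.1]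
          ring
      · intro u v huv hE
        simp only [hBdef, Matrix.add_apply]
        have p1 : pad A₁ u v = 0 := by
          by_cases hu : u ∈ S₁
          · by_cases hv : v ∈ S₁
            · rw [pad_apply_mem A₁ hu hv]
              exact hA₁.2 _ _ (fun h => huv (congrArg Subtype.val h)) hE
            · exact pad_apply_right A₁ _ hv
          · exact pad_apply_left A₁ _ hu
        have p2 : pad A₂ u v = 0 := by
          by_cases hu : u ∈ S₂
          · by_cases hv : v ∈ S₂
            · rw [pad_apply_mem A₂ hu hv]
              exact hA₂.2 _ _ (fun h => huv (congrArg Subtype.val h)) hE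
            · exact pad_apply_right A₂ _ hv
          · exact pad_apply_left A₂ _ hu
        have p3 : pad A₃ u v = 0 := by
          by_cases hu : u ∈ S₃
          · by_cases hv : v ∈ S₃
            · rw [pad_apply_mem A₃ hu hv]
              exact hA₃.2 _ _ (fun h => huv (congrArg Subtype.val h)) hE
            · exact pad_apply_right A₃ _ hv
          · exact pad_apply_left A₃ _ hu
        rw [p1, p2, p3]
        ring
    have hrank : B.rank ≤ A₁.rank + A₂.rank + A₃.rank :=
      (myRank_add_le _ _).trans
        (add_le_add ((myRank_add_le _ _).trans
          (add_le_add (pad_rank_le A₁) (pad_rank_le A₂))) (pad_rank_le A₃))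
    calc minrank F E ≤ B.rank := minrank_le_of_fits _ hfits
      _ ≤ A₁.rank + A₂.rank + A₃.rank := hrank
      _ = _ := by rw [hA₁r, hA₂r, hA₃r]
end

section
/- Let C be a clique of size t in a directed graph G, and let G_C be the graph obtained from G by removing all edges incident (incoming or outgoing) to the vertices of C. Then minrank_q(G) ≤ minrank_q(G_C) ≤ minrank_q(G) + 1. -/
lemma matrix_rank_add_le {V : Type*} [Fintype V] {F : Type*} [Field F]
    (A B : Matrix V V F) : (A + B).rank ≤ A.rank + B.rank := by
  unfold Matrix.rank
  rw [Matrix.mulVecLin_add]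
  refine le_trans (Submodule.finrank_mono ?_)
    (Submodule.finrank_add_le_finrank_add_finrank _ _)
  rintro x ⟨y, rfl⟩
  exact Submodule.add_mem_sup ⟨y, rfl⟩ ⟨y, rfl⟩

lemma id_fits {V : Type*} [Fintype V] [DecidableEq V] {F : Type*} [Field F] (E : V → V → Prop) :
    Fits E (1 : Matrix V V F) := by
  classical
  exact ⟨fun v => Matrix.one_apply_eq v, fun u v h _ => Matrix.one_apply_ne h⟩

theorem minrank_remove_clique_edges_bounds {V : Type*} [Fintype V] {F : Type*} [Field F]
    (E : V → V → Prop) (C : Set V)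
    (hclique : ∀ u ∈ C, ∀ v ∈ C, u ≠ v → E u v) :
    minrank F E ≤ minrank F (fun u v => E u v ∧ ((u ∈ C ∧ v ∈ C) ∨ (u ∉ C ∧ v ∉ C))) ∧
    minrank F (fun u v => E u v ∧ ((u ∈ C ∧ v ∈ C) ∨ (u ∉ C ∧ v ∉ C)))
      ≤ minrank F E + 1 := by
  classical
  set E' : V → V → Prop := fun u v => E u v ∧ ((u ∈ C ∧ v ∈ C) ∨ (u ∉ C ∧ v ∉ C)) with hE'
  have hne : {r | ∃ A : Matrix V V F, Fits E' A ∧ A.rank = r}.Nonempty :=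
    ⟨_, 1, id_fits E', rfl⟩
  have hneE : {r | ∃ A : Matrix V V F, Fits E A ∧ A.rank = r}.Nonempty :=
    ⟨_, 1, id_fits E, rfl⟩
  constructor
  · -- any matrix fitting E' fits E
    obtain ⟨A, hA, hr⟩ := Nat.sInf_mem hne
    refine Nat.sInf_le ⟨A, ⟨hA.1, fun u v huv hnE => hA.2 u v huv ?_⟩, hr⟩
    exact fun h => hnE h.1
  · obtain ⟨A, hA, hr⟩ := Nat.sInf_mem hneE
    set x : V → F := fun v => if v ∈ C then 1 else 0 with hx
    set D : Matrix V V F := Matrix.diagonal (fun v => if v ∈ C then 0 else 1) with hD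
    set B : Matrix V V F := Matrix.vecMulVec x x + D * A * D with hB
    have hfits : Fits E' B := by
      constructor
      · intro v
        by_cases hv : v ∈ C <;>
          simp [hB, hD, hx, Matrix.vecMulVec_apply, Matrix.mul_diagonal,
            Matrix.diagonal_mul, hv, hA.1 v]
      · intro u v huv hnE
        by_cases hu : u ∈ C <;> by_cases hv : v ∈ C
        · exact absurd ⟨hclique u hu v hv huv, Or.inl ⟨hu, hv⟩⟩ hnE
        · simp [hB, hD, hx, Matrix.vecMulVec_apply, Matrix.mul_diagonal,
            Matrix.diagonal_mul, hu, hv]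
        · simp [hB, hD, hx, Matrix.vecMulVec_apply, Matrix.mul_diagonal,
            Matrix.diagonal_mul, hu, hv]
        · have : A u v = 0 := hA.2 u v huv (fun h => hnE ⟨h, Or.inr ⟨hu, hv⟩⟩)
          simp [hB, hD, hx, Matrix.vecMulVec_apply, Matrix.mul_diagonal,
            Matrix.diagonal_mul, hu, hv, this]
    have hrank : B.rank ≤ A.rank + 1 := by
      have h1 : (Matrix.vecMulVec x x).rank ≤ 1 := by
        rw [Matrix.vecMulVec_eq (Fin 1)]
        calc (Matrix.replicateCol (Fin 1) x * Matrix.replicateRow (Fin 1) x).rank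
            ≤ (Matrix.replicateRow (Fin 1) x).rank := Matrix.rank_mul_le_right _ _
          _ ≤ Fintype.card (Fin 1) := Matrix.rank_le_card_height _
          _ = 1 := Fintype.card_fin 1
      have h2 : (D * A * D).rank ≤ A.rank :=
        le_trans (Matrix.rank_mul_le_left _ _)
          (le_trans (Matrix.rank_mul_le_right _ _) le_rfl)
      calc B.rank ≤ (Matrix.vecMulVec x x).rank + (D * A * D).rank :=
            matrix_rank_add_le _ _
        _ ≤ 1 + A.rank := add_le_add h1 h2
        _ = A.rank + 1 := by omega
    calc minrank F E' ≤ B.rank := Nat.sInf_le ⟨B, hfits, rfl⟩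
      _ ≤ A.rank + 1 := hrank
      _ = minrank F E + 1 := by rw [hr]; rfl
end

section
/- Let G be a directed graph on K vertices and A a matrix over F_2 that fits G with rank equal to minrank_2(G). Then for every vertex subset S inducing an acyclic subgraph of G, the rows of A indexed by S are linearly independent over F_2. Consequently rank(A) ≥ MAIS(G). -/
/-- The induced subgraph on `S` has no directed cycle. -/
def IsAcyclicOn {V : Type*} (E : V → V → Prop) (S : Set V) : Prop :=
  ¬ ∃ (n : ℕ) (f : Fin (n + 2) → V), (∀ i, f i ∈ S) ∧ Function.Injective f ∧
      (∀ i : Fin (n + 1), E (f i.castSucc) (f i.succ)) ∧ E (f (Fin.last (n + 1))) (f 0)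

/-- Maximum acyclic induced subgraph size. -/
noncomputable def MAIS {V : Type*} [Fintype V] (E : V → V → Prop) : ℕ :=
  sSup {r | ∃ S : Finset V, IsAcyclicOn E ↑S ∧ S.card = r}


open Function

lemma exists_cycle {α : Type*} [Finite α] [Nonempty α] (g : α → α) (hg : ∀ a, g a ≠ a) :
    ∃ (n : ℕ) (f : Fin (n + 2) → α), Function.Injective f ∧
      (∀ i : Fin (n + 1), f i.castSucc = g (f i.succ)) ∧ f (Fin.last (n + 1)) = g (f 0) := by
  classical
  obtain ⟨x⟩ := ‹Nonempty α›
  have hper : ∃ c, c ∈ periodicPts g := by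
    obtain ⟨i, j, hij, hfij⟩ := Finite.exists_ne_map_eq_of_infinite (fun n : ℕ => g^[n] x)
    have key : ∀ i j : ℕ, i < j → g^[i] x = g^[j] x → ∃ c, c ∈ periodicPts g := by
      intro i j h hf
      refine ⟨g^[i] x, j - i, by omega, ?_⟩
      unfold IsPeriodicPt IsFixedPt
      rw [← Function.iterate_add_apply, Nat.sub_add_cancel h.le]
      exact hf.symm
    rcases lt_or_gt_of_ne hij with h | h
    · exact key i j h hfij
    · exact key j i h hfij.symm
  obtain ⟨c, hc⟩ := hper
  set m := minimalPeriod g c with hm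
  have hm1 : 0 < m := minimalPeriod_pos_of_mem_periodicPts hc
  have hmp : g^[m] c = c := iterate_minimalPeriod
  have hm2 : 2 ≤ m := by
    by_contra h
    have : m = 1 := by omega
    rw [this] at hmp
    exact hg c (by simpa using hmp)
  refine ⟨m - 2, fun i => g^[m - 1 - i.val] c, ?_, ?_, ?_⟩
  · intro a b hab
    have := iterate_injOn_Iio_minimalPeriod (f := g) (x := c)
      (Set.mem_Iio.2 (show m - 1 - a.val < m by omega))
      (Set.mem_Iio.2 (show m - 1 - b.val < m by omega)) hab
    have ha := a.isLt; have hb := b.isLt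
    ext; omega
  · intro k
    have hk := k.isLt
    simp only [Fin.coe_castSucc, Fin.val_succ]
    have e : m - 1 - k.val = (m - 1 - (k.val + 1)) + 1 := by omega
    rw [e, Function.iterate_succ_apply']
  · simp only [Fin.val_last, Fin.val_zero, Nat.sub_zero]
    have e1 : m - 1 - (m - 2 + 1) = 0 := by omega
    rw [e1, ← Function.iterate_succ_apply' g (m - 1) c,
      show (m - 1).succ = m by omega, hmp]
    simp


theorem fitting_rows_indep_on_acyclic {V : Type*} [Fintype V]
    (E : V → V → Prop) (A : Matrix V V (ZMod 2))
    (hfit : Fits E A) (hrank : A.rank = minrank (ZMod 2) E) :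
    (∀ S : Finset V, IsAcyclicOn E ↑S →
        LinearIndependent (ZMod 2) (fun s : {x // x ∈ S} => A s.1)) ∧
    MAIS E ≤ A.rank := by
  classical
  have hindep : ∀ S : Finset V, IsAcyclicOn E ↑S →
      LinearIndependent (ZMod 2) (fun s : {x // x ∈ S} => A s.1) := by
    intro S hS
    by_contra h
    rw [Fintype.not_linearIndependent_iff] at h
    obtain ⟨g, hsum, i0, hi0⟩ := h
    set T : Finset {x // x ∈ S} := Finset.univ.filter (fun i => g i ≠ 0) with hT
    have hi0T : i0 ∈ T := by simp [hT, hi0]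
    have hone : ∀ a : ZMod 2, a ≠ 0 → a = 1 := by decide
    have hsum' : ∑ i ∈ T, A i.1 = 0 := by
      rw [← hsum, hT, Finset.sum_filter]
      apply Finset.sum_congr rfl
      intro i _
      by_cases hgi : g i = 0
      · simp [hgi]
      · simp [hgi, hone _ hgi]
    have hpred : ∀ t ∈ T, ∃ s ∈ T, s ≠ t ∧ E s.1 t.1 := by
      intro t ht
      have h1 : ∑ i ∈ T, A i.1 t.1 = 0 := by
        have := congrFun hsum' t.1
        simpa [Finset.sum_apply] using this
      rw [← Finset.add_sum_erase _ _ ht, hfit.1 t.1] at h1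
      have h2 : ∑ i ∈ T.erase t, A i.1 t.1 ≠ 0 := by
        intro hz
        rw [hz, add_zero] at h1
        exact one_ne_zero h1
      obtain ⟨s, hs, hAs⟩ := Finset.exists_ne_zero_of_sum_ne_zero h2
      have hsne : s ≠ t := Finset.ne_of_mem_erase hs
      have hv : s.1 ≠ t.1 := fun hh => hsne (Subtype.ext hh)
      refine ⟨s, Finset.mem_of_mem_erase hs, hsne, ?_⟩
      by_contra hne
      exact hAs (hfit.2 _ _ hv hne)
    choose p hp1 hp2 hp3 using hpred
    haveI : Nonempty {i // i ∈ T} := ⟨⟨i0, hi0T⟩⟩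
    let q : {i // i ∈ T} → {i // i ∈ T} := fun a => ⟨p a.1 a.2, hp1 a.1 a.2⟩
    have hq : ∀ a, q a ≠ a := fun a hh => hp2 a.1 a.2 (congrArg Subtype.val hh)
    obtain ⟨n, f, finj, hstep, hlast⟩ := exists_cycle q hq
    apply hS
    refine ⟨n, fun i => ((f i).1.1 : V), fun i => (f i).1.2, ?_, ?_, ?_⟩
    · intro a b hh
      exact finj (Subtype.ext (Subtype.ext hh))
    · intro i
      show E ((f i.castSucc).1.1) ((f i.succ).1.1)
      rw [hstep i]
      exact hp3 _ _
    · show E ((f (Fin.last (n+1))).1.1) ((f 0).1.1)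
      rw [hlast]
      exact hp3 _ _
  refine ⟨hindep, ?_⟩
  rw [MAIS]
  apply csSup_le
  · refine ⟨0, ∅, ?_, rfl⟩
    rintro ⟨n, f, hf, -⟩
    simpa using hf 0
  · rintro r ⟨S, hS, rfl⟩
    have li := hindep S hS
    rw [Matrix.rank_eq_finrank_span_row]
    have li' : LinearIndependent (ZMod 2)
        (fun s : {x // x ∈ S} =>
          (⟨A s.1, Submodule.subset_span ⟨s.1, rfl⟩⟩ :
            Submodule.span (ZMod 2) (Set.range A))) :=
      LinearIndependent.of_comp (Submodule.span (ZMod 2) (Set.range A)).subtype li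
    have h2 := li'.fintype_card_le_finrank
    have h3 : S.card ≤ Module.finrank (ZMod 2) (Submodule.span (ZMod 2) (Set.range A)) := by simpa [Fintype.card_coe] using h2
    exact h3
end
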